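/- The Gibbs measure π★ = μ.withDensity (fun ω => ENNReal.ofReal (Real.exp (Q ω / λ) / Z)) is a probability measure with KL(π★‖μ) finite, and it attains ∫ Q dπ★ − λ * (KL(π★‖μ)).toReal = λ * Real.log Z; hence π★ maximizes π ↦ ∫ Q dπ − λ * (KL(π‖μ)).toReal over all probability measures π with finite Kullback–Leibler divergence from μ. -/

import Mathlib

open MeasureTheory

open Classical in
/-- The Kullback–Leibler divergence of `π` from `μ`, valued in `[0,∞]`: the integral of the
logarithm of the Radon–Nikodym density when `π ≪ μ` with integrable log-density, and `∞`
otherwise. -/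
noncomputable def klDiv {Ω : Type*} [MeasurableSpace Ω] (π μ : Measure Ω) : ENNReal :=
  if π ≪ μ ∧ Integrable (llr π μ) π then ENNReal.ofReal (∫ ω, llr π μ ω ∂π) else ⊤

open Real in
/-- Gibbs' inequality: the integral of the log-likelihood ratio is nonnegative. -/
lemma integral_llr_nonneg_aux {Ω : Type*} [MeasurableSpace Ω]
    (p q : Measure Ω) [IsProbabilityMeasure p] [IsProbabilityMeasure q]
    (hpq : p ≪ q) (h_int : Integrable (llr p q) p) :
    0 ≤ ∫ x, llr p q x ∂p := by
  set g : Ω → ℝ := fun x => (q.rnDeriv p x).toReal with hg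
  have hg_lint : ∫⁻ x, q.rnDeriv p x ∂p ≤ 1 := by
    refine (Measure.lintegral_rnDeriv_le).trans_eq ?_
    simp
  have hg_int : Integrable g p := by
    refine integrable_toReal_of_lintegral_ne_top (q.measurable_rnDeriv p).aemeasurable ?_
    exact ne_top_of_le_ne_top ENNReal.one_ne_top hg_lint
  have hg_integral : ∫ x, g x ∂p ≤ 1 := by
    have h1 : ∫ x, g x ∂p ≤ (∫⁻ x, q.rnDeriv p x ∂p).toReal := by
      rw [integral_eq_lintegral_of_nonneg_ae (ae_of_all _ fun x => ENNReal.toReal_nonneg)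
        hg_int.aestronglyMeasurable]
      refine ENNReal.toReal_mono (ne_top_of_le_ne_top ENNReal.one_ne_top hg_lint) ?_
      exact lintegral_mono fun x => ENNReal.ofReal_toReal_le
    calc ∫ x, g x ∂p ≤ (∫⁻ x, q.rnDeriv p x ∂p).toReal := h1
      _ ≤ 1 := by simpa using ENNReal.toReal_mono ENNReal.one_ne_top hg_lint
  have h_ae : ∀ᵐ x ∂p, 1 - g x ≤ llr p q x := by
    filter_upwards [Measure.inv_rnDeriv hpq, Measure.rnDeriv_pos hpq,
      hpq.ae_le (Measure.rnDeriv_lt_top p q)] with x hinv hpos hlt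
    have ht_pos : 0 < (p.rnDeriv q x).toReal := ENNReal.toReal_pos hpos.ne' hlt.ne
    have hgx : g x = ((p.rnDeriv q x).toReal)⁻¹ := by
      have hgx0 : g x = (q.rnDeriv p x).toReal := rfl
      rw [hgx0, ← hinv, Pi.inv_apply, ENNReal.toReal_inv]
    have := Real.log_le_sub_one_of_pos (inv_pos.mpr ht_pos)
    rw [Real.log_inv] at this
    rw [llr_def, hgx]
    linarith
  have h_mono : ∫ x, (1 - g x) ∂p ≤ ∫ x, llr p q x ∂p :=
    integral_mono_ae ((integrable_const (1:ℝ)).sub hg_int) h_int h_ae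
  have : ∫ x, (1 - g x) ∂p = 1 - ∫ x, g x ∂p := by
    rw [integral_sub (integrable_const _) hg_int]; simp
  linarith

/-- The Gibbs measure `π★ = μ.withDensity (fun ω => ENNReal.ofReal (exp (Q ω / λ) / Z))` is a
probability measure with finite KL divergence from `μ`, attains
`∫ Q dπ★ − λ * KL(π★‖μ) = λ * log Z`, and maximizes `π ↦ ∫ Q dπ − λ * KL(π‖μ)` over all
probability measures `π` with finite Kullback–Leibler divergence from `μ`,
where `Z = ∫ exp (Q ω / λ) ∂μ`. -/
theorem gibbs_measure_maximizes_kl_regularized_objective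
    {Ω : Type*} [MeasurableSpace Ω]
    (μ : Measure Ω) [IsProbabilityMeasure μ]
    (Q : Ω → ℝ) (hQmeas : Measurable Q) (C : ℝ) (hQbdd : ∀ ω, |Q ω| ≤ C)
    (lam : ℝ) (hlam : 0 < lam)
    (Z : ℝ) (hZ : Z = ∫ ω, Real.exp (Q ω / lam) ∂μ)
    (pstar : Measure Ω)
    (hpstar : pstar = μ.withDensity (fun ω => ENNReal.ofReal (Real.exp (Q ω / lam) / Z))) :
    IsProbabilityMeasure pstar ∧ klDiv pstar μ ≠ ⊤ ∧
    ((∫ ω, Q ω ∂pstar) - lam * (klDiv pstar μ).toReal = lam * Real.log Z) ∧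
    (∀ π : Measure Ω, IsProbabilityMeasure π → klDiv π μ ≠ ⊤ →
      (∫ ω, Q ω ∂π) - lam * (klDiv π μ).toReal
        ≤ (∫ ω, Q ω ∂pstar) - lam * (klDiv pstar μ).toReal) := by
  set f : Ω → ℝ := fun ω => Q ω / lam with hf
  have hf_meas : Measurable f := hQmeas.div_const lam
  -- boundedness facts
  have hf_bdd : ∀ ω, |f ω| ≤ C / lam := fun ω => by
    rw [hf, abs_div, abs_of_pos hlam]
    gcongr
    exact hQbdd ω
  have hf_int : ∀ (m : Measure Ω) [IsProbabilityMeasure m], Integrable f m := by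
    intro m _
    exact (integrable_const (C / lam)).mono' hf_meas.aestronglyMeasurable
      (ae_of_all _ hf_bdd)
  have hQ_int : ∀ (m : Measure Ω) [IsProbabilityMeasure m], Integrable Q m := by
    intro m _
    exact (integrable_const C).mono' hQmeas.aestronglyMeasurable (ae_of_all _ hQbdd)
  have hexp_int : Integrable (fun ω => Real.exp (f ω)) μ := by
    refine (integrable_const (Real.exp (C / lam))).mono'
      (hf_meas.exp).aestronglyMeasurable (ae_of_all _ fun ω => ?_)
    rw [Real.norm_eq_abs, abs_of_pos (Real.exp_pos _)]
    exact Real.exp_le_exp.mpr ((le_abs_self _).trans (hf_bdd ω))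
  have hZ' : Z = ∫ ω, Real.exp (f ω) ∂μ := hZ
  have hZpos : 0 < Z := hZ' ▸ integral_exp_pos hexp_int
  -- pstar is the tilted measure
  have hps : pstar = μ.tilted f := by
    rw [hpstar, Measure.tilted, hZ']
  have hps_prob : IsProbabilityMeasure pstar := by
    rw [hps]; exact isProbabilityMeasure_tilted hexp_int
  have hps_ac : pstar ≪ μ := hps ▸ tilted_absolutelyContinuous μ f
  have hμ_ac_ps : μ ≪ pstar := hps ▸ absolutelyContinuous_tilted hexp_int
  -- llr pstar μ is a.e. equal to f - log Z
  have h_llr_self : llr μ μ =ᵐ[μ] fun _ => (0:ℝ) := by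
    filter_upwards [Measure.rnDeriv_self μ] with x hx
    simp [llr_def, hx]
  have h_llr_self_int : Integrable (llr μ μ) μ :=
    (integrable_congr h_llr_self).mpr (integrable_const 0)
  have h_llr_ps : llr pstar μ =ᵐ[μ] fun x => f x - Real.log Z := by
    rw [hps]
    filter_upwards [llr_tilted_left (Measure.AbsolutelyContinuous.refl μ) hexp_int
      hf_meas.aemeasurable, h_llr_self] with x hx hx0
    rw [hx, hx0, ← hZ']
    ring
  have h_llr_ps' : llr pstar μ =ᵐ[pstar] fun x => f x - Real.log Z := hps_ac.ae_le h_llr_ps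
  have h_llr_ps_int : Integrable (llr pstar μ) pstar := by
    rw [integrable_congr h_llr_ps']
    exact (hf_int pstar).sub (integrable_const _)
  -- value of the KL divergence of pstar
  have h_int_eq : ∫ x, llr pstar μ x ∂pstar = (∫ ω, Q ω ∂pstar) / lam - Real.log Z := by
    rw [integral_congr_ae h_llr_ps',
      integral_sub (hf_int pstar) (integrable_const _)]
    simp only [integral_const, measure_univ, probReal_univ, ENNReal.toReal_one, smul_eq_mul, one_mul]
    rw [hf]
    rw [integral_div]
  have h_int_nonneg : 0 ≤ ∫ x, llr pstar μ x ∂pstar :=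
    integral_llr_nonneg_aux pstar μ hps_ac h_llr_ps_int
  have hkl_ps : klDiv pstar μ = ENNReal.ofReal (∫ x, llr pstar μ x ∂pstar) := by
    rw [klDiv, if_pos ⟨hps_ac, h_llr_ps_int⟩]
  have hkl_ps_toReal : (klDiv pstar μ).toReal = (∫ ω, Q ω ∂pstar) / lam - Real.log Z := by
    rw [hkl_ps, ENNReal.toReal_ofReal h_int_nonneg, h_int_eq]
  have h_attain : (∫ ω, Q ω ∂pstar) - lam * (klDiv pstar μ).toReal = lam * Real.log Z := by
    rw [hkl_ps_toReal]
    field_simp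
    ring
  refine ⟨hps_prob, ?_, h_attain, ?_⟩
  · rw [hkl_ps]; exact ENNReal.ofReal_ne_top
  · intro π hπ_prob hπ_ne_top
    have hπ : π ≪ μ ∧ Integrable (llr π μ) π := by
      by_contra h
      rw [klDiv, if_neg h] at hπ_ne_top
      exact hπ_ne_top rfl
    obtain ⟨hπμ, hπ_int⟩ := hπ
    have hkl_π : (klDiv π μ).toReal = ∫ x, llr π μ x ∂π := by
      rw [klDiv, if_pos ⟨hπμ, hπ_int⟩,
        ENNReal.toReal_ofReal (integral_llr_nonneg_aux π μ hπμ hπ_int)]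
    -- chain rule: llr π pstar
    have h_tilt : ∫ x, llr π (μ.tilted f) x ∂π
        = ∫ x, llr π μ x ∂π - ∫ x, f x ∂π + Real.log (∫ x, Real.exp (f x) ∂μ) :=
      integral_llr_tilted_right hπμ (hf_int π) hexp_int hπ_int
    have hπ_ps : π ≪ pstar := hπμ.trans hμ_ac_ps
    have h_tilt_int : Integrable (llr π (μ.tilted f)) π :=
      integrable_llr_tilted_right hπμ (hf_int π) hπ_int hexp_int
    have h_nonneg : 0 ≤ ∫ x, llr π (μ.tilted f) x ∂π := by
      have : IsProbabilityMeasure (μ.tilted f) := hps ▸ hps_prob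
      exact integral_llr_nonneg_aux π (μ.tilted f) (hps ▸ hπ_ps) h_tilt_int
    rw [h_tilt, ← hZ'] at h_nonneg
    have hfπ : ∫ x, f x ∂π = (∫ ω, Q ω ∂π) / lam := by
      rw [hf, integral_div]
    rw [hfπ] at h_nonneg
    rw [hkl_π, h_attain]
    have h1 : ∫ x, llr π μ x ∂π ≥ (∫ ω, Q ω ∂π) / lam - Real.log Z := by linarith
    have h2 : lam * ((∫ ω, Q ω ∂π) / lam) = ∫ ω, Q ω ∂π := by field_simp
    nlinarith [mul_le_mul_of_nonneg_left h1 hlam.le]
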